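/- For integers m ≥ 0 and n, k ≥ 1, one has x₀^m ш (x₁^n x₀^k) = Σ_{m₁+m₂=m, m_i ≥ 0} C(m₂+k-1, k-1) · 𝔅_{n+1}^{m₁} x₀^{m₂+k}, an identity of multisets of words, where a binomial coefficient c multiplying a multiset means the multiset repeated c times. -/

import Mathlib

/-- The shuffle product of two words, as a multiset of words. -/
def shuffle {X : Type*} : List X → List X → Multiset (List X)
  | u, [] => {u}
  | [], v => {v}
  | a :: u, b :: v =>
      (shuffle u (b :: v)).map (a :: ·) + (shuffle (a :: u) v).map (b :: ·)
termination_by u v => u.length + v.length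

/-- The two-letter alphabet `X = {x₀, x₁}`. -/
def x0 : Bool := false
def x1 : Bool := true

/-- `𝔅_r^m`: the multiset of all words `x₀^{m₁} x₁ x₀^{m₂} x₁ ⋯ x₁ x₀^{m_r}`
with `m₁ + ⋯ + m_r = m`, `m_i ≥ 0`. -/
def B (r m : ℕ) : Multiset (List Bool) :=
  (Finset.Nat.antidiagonalTuple r m).val.map fun f =>
    List.intercalate [x1] (List.ofFn fun i => List.replicate (f i) x0)

/-- `S w T`: the multiset of all concatenations `u ++ w ++ v` with `u ∈ S`, `v ∈ T`,
counted with multiplicity. -/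
def msConcat {X : Type*} (S : Multiset (List X)) (w : List X) (T : Multiset (List X)) :
    Multiset (List X) :=
  S.bind fun u => T.map fun v => u ++ w ++ v

/- ### Auxiliary lemmas -/

lemma shuffle_nil_left {X : Type*} (v : List X) : shuffle [] v = {v} := by
  cases v <;> simp [shuffle]

lemma shuffle_nil_right {X : Type*} (u : List X) : shuffle u [] = {u} := by
  cases u <;> simp [shuffle]

lemma shuffle_cons_cons {X : Type*} (a b : X) (u v : List X) :
    shuffle (a :: u) (b :: v) =
      (shuffle u (b :: v)).map (a :: ·) + (shuffle (a :: u) v).map (b :: ·) := by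
  rw [shuffle]

lemma shuffle_replicate {X : Type*} (a : X) :
    ∀ m k, shuffle (List.replicate m a) (List.replicate k a)
      = (m + k).choose k • {List.replicate (m + k) a} := by
  intro m
  induction m with
  | zero => intro k; simp [shuffle_nil_left]
  | succ m ihm =>
    intro k
    induction k with
    | zero => simp [shuffle_nil_right]
    | succ k ihk =>
      rw [List.replicate_succ (a := a) (n := m), List.replicate_succ (a := a) (n := k), shuffle_cons_cons]
      simp only [← List.replicate_succ]
      rw [ihm (k+1), ihk, Multiset.map_nsmul, Multiset.map_nsmul]
      simp only [Multiset.map_singleton, ← List.replicate_succ]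
      have h1 : m + (k + 1) + 1 = m + 1 + (k + 1) := by ring
      have h2 : m + 1 + k + 1 = m + 1 + (k + 1) := by ring
      rw [h1, h2, ← add_nsmul]
      congr 1
      rw [show m+(k+1)=m+k+1 from by ring, show m+1+k=m+k+1 from by ring,
        show m+1+(k+1)=(m+k+1)+1 from by ring]
      conv_rhs => rw [Nat.choose_succ_succ' (m+k+1) k]
      exact Nat.add_comm _ _

lemma intercalate_cons {α : Type*} (s a : List α) (L : List (List α)) (h : L ≠ []) :
    List.intercalate s (a :: L) = a ++ s ++ List.intercalate s L := by
  cases L with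
  | nil => exact absurd rfl h
  | cons b L' => simp [List.intercalate, List.intersperse]

lemma B_succ (n M : ℕ) (hn : 1 ≤ n) :
    B (n+1) M = ∑ p ∈ Finset.HasAntidiagonal.antidiagonal M,
      Multiset.map (fun w => List.replicate p.1 x0 ++ x1 :: w) (B n p.2) := by
  have h2 : (Finset.HasAntidiagonal.antidiagonal M).val = (List.Nat.antidiagonal M : Multiset (ℕ × ℕ)) := rfl
  have h3 : List.Nat.antidiagonalTuple (n+1) M = (List.Nat.antidiagonal M).flatMap fun ni =>
      (List.Nat.antidiagonalTuple n ni.2).map fun x => Fin.cons ni.1 x := rfl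
  rw [Finset.sum_eq_multiset_sum, h2]
  unfold B
  rw [show (Finset.Nat.antidiagonalTuple (n+1) M).val
      = (List.Nat.antidiagonalTuple (n+1) M : Multiset (Fin (n+1) → ℕ)) from rfl, h3,
    ← Multiset.coe_bind, Multiset.map_bind, Multiset.bind]
  congr 1
  apply Multiset.map_congr rfl
  intro p _
  rw [Multiset.map_coe, List.map_map,
    show (Finset.Nat.antidiagonalTuple n p.2).val
      = (List.Nat.antidiagonalTuple n p.2 : Multiset (Fin n → ℕ)) from rfl,
    Multiset.map_coe, Multiset.map_coe, List.map_map]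
  congr 1
  apply List.map_congr_left
  intro f _
  show List.intercalate [x1] (List.ofFn fun i => List.replicate ((Fin.cons p.1 f : Fin (n+1) → ℕ) i) x0)
    = List.replicate p.1 x0 ++ x1 :: List.intercalate [x1] (List.ofFn fun i => List.replicate (f i) x0)
  rw [List.ofFn_succ]
  simp only [Fin.cons_zero, Fin.cons_succ]
  rw [intercalate_cons]
  · simp
  · simp only [ne_eq, List.ofFn_eq_nil_iff]
    omega

lemma B_zero_left (n : ℕ) (hn : 1 ≤ n) :
    B (n+1) 0 = (B n 0).map (x1 :: ·) := by
  rw [B_succ n 0 hn]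
  simp

lemma B_split (n q : ℕ) (hn : 1 ≤ n) :
    B (n+1) (q+1) = (B (n+1) q).map (x0 :: ·) + (B n (q+1)).map (x1 :: ·) := by
  rw [B_succ n (q+1) hn, B_succ n q hn,
    Finset.Nat.sum_antidiagonal_eq_sum_range_succ_mk,
    Finset.Nat.sum_antidiagonal_eq_sum_range_succ_mk,
    Finset.sum_range_succ']
  congr 1
  · rw [← Multiset.coe_mapAddMonoidHom (x0 :: ·), map_sum]
    refine Finset.sum_congr rfl fun i hi => ?_
    rw [Multiset.coe_mapAddMonoidHom, Multiset.map_map]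
    have : q + 1 - (i + 1) = q - i := by omega
    rw [this]
    rfl

lemma B_one (q : ℕ) : B 1 q = {List.replicate q x0} := by
  unfold B
  rw [show (Finset.Nat.antidiagonalTuple 1 q).val
      = (List.Nat.antidiagonalTuple 1 q : Multiset (Fin 1 → ℕ)) from rfl,
    List.Nat.antidiagonalTuple_one]
  simp [List.intercalate]

lemma B_nil (n : ℕ) : B (n+1) 0 = {List.replicate n x1} := by
  induction n with
  | zero => simpa using B_one 0
  | succ n ih =>
    rw [B_zero_left (n+1) (by omega), ih]
    simp [List.replicate_succ]

lemma map_finset_sum' {α β γ : Type*} (f : α → β) (s : Finset γ) (g : γ → Multiset α) :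
    Multiset.map f (∑ i ∈ s, g i) = ∑ i ∈ s, Multiset.map f (g i) :=
  map_sum (Multiset.mapAddMonoidHom f) g s

lemma hockey (k : ℕ) (hk : 1 ≤ k) :
    ∀ M, ∑ i ∈ Finset.range (M+1), (i + k - 1).choose (k-1) = (M+k).choose k := by
  obtain ⟨j, rfl⟩ : ∃ j, k = j + 1 := ⟨k - 1, by omega⟩
  intro M
  induction M with
  | zero => simp
  | succ M ih =>
    rw [Finset.sum_range_succ, ih]
    have h1 : M + 1 + (j + 1) - 1 = M + j + 1 := by omega
    have h2 : j + 1 - 1 = j := by omega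
    have h3 : M + (j + 1) = M + j + 1 := by omega
    have h4 : M + 1 + (j + 1) = (M + j + 1) + 1 := by omega
    rw [h1, h2, h3, h4, Nat.choose_succ_succ' (M + j + 1) j, Nat.add_comm]

lemma main_gen (k : ℕ) (hk : 1 ≤ k) : ∀ m n,
    shuffle (List.replicate m x0) (List.replicate n x1 ++ List.replicate k x0) =
      ∑ i ∈ Finset.range (m+1), (m - i + k - 1).choose (k - 1) •
        (B (n + 1) i).map (fun w => w ++ List.replicate (m - i + k) x0) := by
  intro m
  induction m with
  | zero =>
    intro n
    rw [List.replicate_zero, shuffle_nil_left, Finset.sum_range_one, B_nil]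
    simp
  | succ m ihm =>
    intro n
    induction n with
    | zero =>
      rw [List.replicate_zero, List.nil_append, shuffle_replicate]
      have : ∀ i ∈ Finset.range (m+2), (m + 1 - i + k - 1).choose (k - 1) •
          Multiset.map (fun w => w ++ List.replicate (m + 1 - i + k) x0) (B (0+1) i)
          = (m + 1 - i + k - 1).choose (k - 1) • ({List.replicate (m+1+k) x0} : Multiset _) := by
        intro i hi
        rw [Finset.mem_range] at hi
        rw [B_one, Multiset.map_singleton, ← List.replicate_add,
          show i + (m + 1 - i + k) = m + 1 + k from by omega]
      rw [Finset.sum_congr rfl this, ← Finset.sum_smul]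
      congr 1
      rw [← hockey k hk (m+1)]
      exact (Finset.sum_range_reflect (fun i => (i + k - 1).choose (k-1)) (m+2)).symm
    | succ n ihn =>
      rw [List.replicate_succ (a := x0) (n := m), List.replicate_succ (a := x1) (n := n), List.cons_append,
        shuffle_cons_cons, ← List.replicate_succ (a := x0) (n := m), ← List.cons_append,
        ← List.replicate_succ (a := x1) (n := n), ihm (n+1), ihn]
      conv_rhs => rw [Finset.sum_range_succ']
      rw [Finset.sum_range_succ' (fun i => (m + 1 - i + k - 1).choose (k - 1) •
          Multiset.map (fun w => w ++ List.replicate (m + 1 - i + k) x0) (B (n + 1) i)) (m+1)]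
      rw [map_finset_sum', Multiset.map_add, map_finset_sum', ← add_assoc,
        ← Finset.sum_add_distrib]
      congr 1
      · refine Finset.sum_congr rfl fun i hi => ?_
        rw [Finset.mem_range] at hi
        rw [show m + 1 - (i + 1) = m - i from by omega,
          Multiset.map_nsmul, Multiset.map_nsmul, ← nsmul_add]
        congr 1
        rw [B_split (n+1) i (by omega), Multiset.map_add, Multiset.map_map,
          Multiset.map_map, Multiset.map_map, Multiset.map_map]
        congr 1
      · rw [Multiset.map_nsmul]
        congr 1
        rw [B_zero_left (n+1) (by omega), Multiset.map_map, Multiset.map_map]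
        rfl

theorem shuffle_x0_pow_x1_pow_x0_pow (m n k : ℕ) (hn : 1 ≤ n) (hk : 1 ≤ k) :
    shuffle (List.replicate m x0) (List.replicate n x1 ++ List.replicate k x0) =
      ∑ p ∈ Finset.HasAntidiagonal.antidiagonal m,
        Nat.choose (p.2 + k - 1) (k - 1) •
          (B (n + 1) p.1).map (fun w => w ++ List.replicate (p.2 + k) x0) := by
  rw [main_gen k hk m n, Finset.Nat.sum_antidiagonal_eq_sum_range_succ_mk]
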